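/- Let a < 0 and T > 0. On the interval (−|a|, |a|) define f(k) = (−k·sinh(ℓT) − ℓ)/(2ℓ·(a − k·cosh(ℓT))), where ℓ = √(a² − k²). Then f(0) = −1/(2a) = 1/(2|a|), the first derivative of f at k = 0 equals −e^{T·a}/(2a²), and the second derivative of f at k = 0 equals (e^{2T·a} + 1)/(2|a|³). -/

import Mathlib

theorem stmt14 (a T : ℝ) (ha : a < 0) (hT : 0 < T)
    (f : ℝ → ℝ)
    (hf : ∀ k : ℝ, f k =
      (-k * Real.sinh (Real.sqrt (a ^ 2 - k ^ 2) * T) - Real.sqrt (a ^ 2 - k ^ 2)) /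
        (2 * Real.sqrt (a ^ 2 - k ^ 2) *
          (a - k * Real.cosh (Real.sqrt (a ^ 2 - k ^ 2) * T)))) :
    f 0 = -1 / (2 * a) ∧ (-1 / (2 * a) : ℝ) = 1 / (2 * |a|) ∧
    HasDerivAt f (-Real.exp (T * a) / (2 * a ^ 2)) 0 ∧
    HasDerivAt (deriv f) ((Real.exp (2 * T * a) + 1) / (2 * |a| ^ 3)) 0 := by
  have hane : a ≠ 0 := ne_of_lt ha
  have hs0 : Real.sqrt (a ^ 2 - 0 ^ 2) = -a := by
    rw [show a ^ 2 - 0 ^ 2 = (-a) ^ 2 by ring]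
    exact Real.sqrt_sq (by linarith)
  obtain ⟨D, hD⟩ : ∃ D : ℝ → ℝ, D = fun k : ℝ =>
      ((-1 * Real.sinh (Real.sqrt (a ^ 2 - k ^ 2) * T) +
          -k * (Real.cosh (Real.sqrt (a ^ 2 - k ^ 2) * T) *
            (-(2 * k) / (2 * Real.sqrt (a ^ 2 - k ^ 2)) * T)) -
          -(2 * k) / (2 * Real.sqrt (a ^ 2 - k ^ 2))) *
        (2 * Real.sqrt (a ^ 2 - k ^ 2) * (a - k * Real.cosh (Real.sqrt (a ^ 2 - k ^ 2) * T))) -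
      (-k * Real.sinh (Real.sqrt (a ^ 2 - k ^ 2) * T) - Real.sqrt (a ^ 2 - k ^ 2)) *
        (2 * (-(2 * k) / (2 * Real.sqrt (a ^ 2 - k ^ 2))) *
            (a - k * Real.cosh (Real.sqrt (a ^ 2 - k ^ 2) * T)) +
          2 * Real.sqrt (a ^ 2 - k ^ 2) *
            -(1 * Real.cosh (Real.sqrt (a ^ 2 - k ^ 2) * T) +
              k * (Real.sinh (Real.sqrt (a ^ 2 - k ^ 2) * T) *
                (-(2 * k) / (2 * Real.sqrt (a ^ 2 - k ^ 2)) * T))))) /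
      (2 * Real.sqrt (a ^ 2 - k ^ 2) * (a - k * Real.cosh (Real.sqrt (a ^ 2 - k ^ 2) * T))) ^ 2 :=
    ⟨_, rfl⟩
  have key : ∀ k : ℝ, k ^ 2 < a ^ 2 →
      a - k * Real.cosh (Real.sqrt (a ^ 2 - k ^ 2) * T) ≠ 0 → HasDerivAt f (D k) k := by
    intro k hk1 hk2
    have hpos : 0 < a ^ 2 - k ^ 2 := by linarith
    have hlpos : 0 < Real.sqrt (a ^ 2 - k ^ 2) := Real.sqrt_pos.2 hpos
    have hfun : f = fun k => (-k * Real.sinh (Real.sqrt (a ^ 2 - k ^ 2) * T) -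
        Real.sqrt (a ^ 2 - k ^ 2)) / (2 * Real.sqrt (a ^ 2 - k ^ 2) *
          (a - k * Real.cosh (Real.sqrt (a ^ 2 - k ^ 2) * T))) := funext hf
    rw [hfun]
    simp only [hD]
    have hpow : HasDerivAt (fun x : ℝ => x ^ 2) (2 * k) k := by
      simpa using hasDerivAt_pow 2 k
    have hL : HasDerivAt (fun x : ℝ => Real.sqrt (a ^ 2 - x ^ 2))
        (-(2 * k) / (2 * Real.sqrt (a ^ 2 - k ^ 2))) k :=
      (hpow.const_sub (a ^ 2)).sqrt (ne_of_gt hpos)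
    have hS := (hL.mul_const T).sinh
    have hC := (hL.mul_const T).cosh
    have hN := ((hasDerivAt_id k).neg.mul hS).sub hL
    have hM := ((hasDerivAt_id k).mul hC).const_sub a
    have hDen := (hL.const_mul 2).mul hM
    have hDenne : 2 * Real.sqrt (a ^ 2 - k ^ 2) *
        (a - k * Real.cosh (Real.sqrt (a ^ 2 - k ^ 2) * T)) ≠ 0 :=
      mul_ne_zero (mul_ne_zero two_ne_zero (ne_of_gt hlpos)) hk2
    exact hN.div hDen hDenne
  have h0lt : (0:ℝ) ^ 2 < a ^ 2 := by
    have : (0:ℝ) < a ^ 2 := by positivity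
    simpa using this
  have h0ne : a - 0 * Real.cosh (Real.sqrt (a ^ 2 - 0 ^ 2) * T) ≠ 0 := by
    simpa using hane
  refine ⟨?_, ?_, ?_, ?_⟩
  · rw [hf 0, hs0]
    field_simp
    simp [hane]
  · rw [abs_of_neg ha]
    field_simp
  · have h := key 0 h0lt h0ne
    convert h using 1
    simp only [hD, hs0]
    rw [show -a * T = -(T * a) by ring, Real.sinh_eq, Real.cosh_eq, neg_neg, Real.exp_neg]
    field_simp
    ring
  · have h1ev : ∀ᶠ k in nhds (0:ℝ), k ^ 2 < a ^ 2 := by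
      have hc : ContinuousAt (fun k : ℝ => k ^ 2) 0 := by fun_prop
      exact hc.eventually_lt continuousAt_const h0lt
    have h2ev : ∀ᶠ k in nhds (0:ℝ),
        a - k * Real.cosh (Real.sqrt (a ^ 2 - k ^ 2) * T) ≠ 0 := by
      have hc : ContinuousAt
          (fun k : ℝ => a - k * Real.cosh (Real.sqrt (a ^ 2 - k ^ 2) * T)) 0 := by fun_prop
      exact hc.eventually_ne h0ne
    have hfD : deriv f =ᶠ[nhds (0:ℝ)] D := by
      filter_upwards [h1ev, h2ev] with k hk1 hk2
      exact (key k hk1 hk2).deriv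
    have hpos0 : 0 < a ^ 2 - 0 ^ 2 := by linarith [h0lt]
    have hl0pos : 0 < Real.sqrt (a ^ 2 - 0 ^ 2) := Real.sqrt_pos.2 hpos0
    have hpow : HasDerivAt (fun x : ℝ => x ^ 2) (2 * (0:ℝ)) 0 := by
      simpa using hasDerivAt_pow 2 (0:ℝ)
    have hL0 : HasDerivAt (fun x : ℝ => Real.sqrt (a ^ 2 - x ^ 2))
        (-(2 * (0:ℝ)) / (2 * Real.sqrt (a ^ 2 - (0:ℝ) ^ 2))) 0 :=
      (hpow.const_sub (a ^ 2)).sqrt (ne_of_gt hpos0)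
    have hg := (((hasDerivAt_id (0:ℝ)).const_mul 2).neg).div (hL0.const_mul 2)
      (by positivity)
    have hS0 := (hL0.mul_const T).sinh
    have hC0 := (hL0.mul_const T).cosh
    have hM0 := ((hasDerivAt_id (0:ℝ)).mul hC0).const_sub a
    have hA := ((hS0.const_mul (-1)).add
      (((hasDerivAt_id (0:ℝ)).neg).mul (hC0.mul (hg.mul_const T)))).sub hg
    have hB := (hL0.const_mul 2).mul hM0
    have hP := (((hasDerivAt_id (0:ℝ)).neg).mul hS0).sub hL0
    have hQ := ((hg.const_mul 2).mul hM0).add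
      ((hL0.const_mul 2).mul (((hC0.const_mul 1).add
        ((hasDerivAt_id (0:ℝ)).mul (hS0.mul (hg.mul_const T)))).neg))
    have hBne : 2 * Real.sqrt (a ^ 2 - (0:ℝ) ^ 2) *
        (a - 0 * Real.cosh (Real.sqrt (a ^ 2 - (0:ℝ) ^ 2) * T)) ≠ 0 :=
      mul_ne_zero (by positivity) h0ne
    have hbig := ((hA.mul hB).sub (hP.mul hQ)).div (hB.pow 2) (pow_ne_zero 2 hBne)
    have hDD : HasDerivAt D ((Real.exp (2 * T * a) + 1) / (2 * |a| ^ 3)) 0 := by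
      rw [hD]
      refine hbig.congr_deriv (Eq.symm ?_)
      simp only [Pi.mul_apply, Pi.add_apply, Pi.sub_apply, Pi.neg_apply, Pi.div_apply, Pi.pow_apply, id]
      simp only [hs0]
      rw [abs_of_neg ha,
        show -a * T = -(T * a) by ring, Real.sinh_eq, Real.cosh_eq, neg_neg, Real.exp_neg,
        show 2 * T * a = T * a + T * a by ring, Real.exp_add]
      norm_num
      field_simp
      ring
    exact hDD.congr_of_eventuallyEq hfD
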